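/- For every N ≥ 1, ∫₀^{1/N} |D_N(f)|² df ≥ 0.45·N. -/

import Mathlib

open MeasureTheory Real

private lemma deriv_chain {f g f' g' : ℝ → ℝ}
    (hf : ∀ t, HasDerivAt f (f' t) t) (hg : ∀ t, HasDerivAt g (g' t) t)
    (h0 : f 0 ≤ g 0) (hle : ∀ t, 0 ≤ t → f' t ≤ g' t) :
    ∀ t, 0 ≤ t → f t ≤ g t := by
  intro t ht
  have hmono : MonotoneOn (fun t => g t - f t) (Set.Ici (0:ℝ)) := by
    apply monotoneOn_of_deriv_nonneg (convex_Ici 0)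
    · exact (Continuous.sub
        (continuous_iff_continuousAt.2 fun x => (hg x).continuousAt)
        (continuous_iff_continuousAt.2 fun x => (hf x).continuousAt)).continuousOn
    · intro x _
      exact ((hg x).sub (hf x)).differentiableAt.differentiableWithinAt
    · intro x hx
      rw [show (fun t => g t - f t) = g - f from rfl, ((hg x).sub (hf x)).deriv]
      have := hle x (le_of_lt (by simpa using hx))
      linarith
  have := hmono (Set.self_mem_Ici) ht ht
  simp only at this
  linarith


private lemma taylor_C2_ge : ∀ t : ℝ, 0 ≤ t → 1 - t^2/2 ≤ Real.cos t := by
  have hp : ∀ t : ℝ, HasDerivAt (fun t : ℝ => 1 - t^2/2) (-t) t := by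
    intro t
    have h := ((hasDerivAt_const t (1:ℝ)).sub ((hasDerivAt_pow 2 t).div_const 2))
    refine h.congr_deriv ?_
    push_cast
    ring
  refine deriv_chain hp (fun t => Real.hasDerivAt_cos t) (by norm_num) ?_
  intro t ht
  have := Real.sin_le ht
  linarith

private lemma taylor_S3_ge : ∀ t : ℝ, 0 ≤ t → t - t^3/6 ≤ Real.sin t := by
  have hp : ∀ t : ℝ, HasDerivAt (fun t : ℝ => t - t^3/6) (1 - t^2/2) t := by
    intro t
    have h := ((hasDerivAt_id' t).sub ((hasDerivAt_pow 3 t).div_const 6))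
    refine h.congr_deriv ?_
    push_cast
    ring
  refine deriv_chain hp (fun t => Real.hasDerivAt_sin t) (by norm_num) ?_
  intro t ht
  have := taylor_C2_ge t ht
  linarith

private lemma taylor_C4_le : ∀ t : ℝ, 0 ≤ t → Real.cos t ≤ 1 - t^2/2 + t^4/24 := by
  have hp : ∀ t : ℝ, HasDerivAt (fun t : ℝ => 1 - t^2/2 + t^4/24) (-t + t^3/6) t := by
    intro t
    have h := (((hasDerivAt_const t (1:ℝ)).sub ((hasDerivAt_pow 2 t).div_const 2)).add ((hasDerivAt_pow 4 t).div_const 24))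
    refine h.congr_deriv ?_
    push_cast
    ring
  refine deriv_chain (fun t => Real.hasDerivAt_cos t) hp (by norm_num) ?_
  intro t ht
  have := taylor_S3_ge t ht
  linarith

private lemma taylor_S5_le : ∀ t : ℝ, 0 ≤ t → Real.sin t ≤ t - t^3/6 + t^5/120 := by
  have hp : ∀ t : ℝ, HasDerivAt (fun t : ℝ => t - t^3/6 + t^5/120) (1 - t^2/2 + t^4/24) t := by
    intro t
    have h := (((hasDerivAt_id' t).sub ((hasDerivAt_pow 3 t).div_const 6)).add ((hasDerivAt_pow 5 t).div_const 120))
    refine h.congr_deriv ?_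
    push_cast
    ring
  refine deriv_chain (fun t => Real.hasDerivAt_sin t) hp (by norm_num) ?_
  intro t ht
  have := taylor_C4_le t ht
  linarith

private lemma taylor_C6_ge : ∀ t : ℝ, 0 ≤ t → 1 - t^2/2 + t^4/24 - t^6/720 ≤ Real.cos t := by
  have hp : ∀ t : ℝ, HasDerivAt (fun t : ℝ => 1 - t^2/2 + t^4/24 - t^6/720) (-t + t^3/6 - t^5/120) t := by
    intro t
    have h := ((((hasDerivAt_const t (1:ℝ)).sub ((hasDerivAt_pow 2 t).div_const 2)).add ((hasDerivAt_pow 4 t).div_const 24)).sub ((hasDerivAt_pow 6 t).div_const 720))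
    refine h.congr_deriv ?_
    push_cast
    ring
  refine deriv_chain hp (fun t => Real.hasDerivAt_cos t) (by norm_num) ?_
  intro t ht
  have := taylor_S5_le t ht
  linarith

private lemma taylor_S7_ge : ∀ t : ℝ, 0 ≤ t → t - t^3/6 + t^5/120 - t^7/5040 ≤ Real.sin t := by
  have hp : ∀ t : ℝ, HasDerivAt (fun t : ℝ => t - t^3/6 + t^5/120 - t^7/5040) (1 - t^2/2 + t^4/24 - t^6/720) t := by
    intro t
    have h := ((((hasDerivAt_id' t).sub ((hasDerivAt_pow 3 t).div_const 6)).add ((hasDerivAt_pow 5 t).div_const 120)).sub ((hasDerivAt_pow 7 t).div_const 5040))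
    refine h.congr_deriv ?_
    push_cast
    ring
  refine deriv_chain hp (fun t => Real.hasDerivAt_sin t) (by norm_num) ?_
  intro t ht
  have := taylor_C6_ge t ht
  linarith

private lemma taylor_C8_le : ∀ t : ℝ, 0 ≤ t → Real.cos t ≤ 1 - t^2/2 + t^4/24 - t^6/720 + t^8/40320 := by
  have hp : ∀ t : ℝ, HasDerivAt (fun t : ℝ => 1 - t^2/2 + t^4/24 - t^6/720 + t^8/40320) (-t + t^3/6 - t^5/120 + t^7/5040) t := by
    intro t
    have h := (((((hasDerivAt_const t (1:ℝ)).sub ((hasDerivAt_pow 2 t).div_const 2)).add ((hasDerivAt_pow 4 t).div_const 24)).sub ((hasDerivAt_pow 6 t).div_const 720)).add ((hasDerivAt_pow 8 t).div_const 40320))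
    refine h.congr_deriv ?_
    push_cast
    ring
  refine deriv_chain (fun t => Real.hasDerivAt_cos t) hp (by norm_num) ?_
  intro t ht
  have := taylor_S7_ge t ht
  linarith

private lemma taylor_S9_le : ∀ t : ℝ, 0 ≤ t → Real.sin t ≤ t - t^3/6 + t^5/120 - t^7/5040 + t^9/362880 := by
  have hp : ∀ t : ℝ, HasDerivAt (fun t : ℝ => t - t^3/6 + t^5/120 - t^7/5040 + t^9/362880) (1 - t^2/2 + t^4/24 - t^6/720 + t^8/40320) t := by
    intro t
    have h := (((((hasDerivAt_id' t).sub ((hasDerivAt_pow 3 t).div_const 6)).add ((hasDerivAt_pow 5 t).div_const 120)).sub ((hasDerivAt_pow 7 t).div_const 5040)).add ((hasDerivAt_pow 9 t).div_const 362880))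
    refine h.congr_deriv ?_
    push_cast
    ring
  refine deriv_chain (fun t => Real.hasDerivAt_sin t) hp (by norm_num) ?_
  intro t ht
  have := taylor_C8_le t ht
  linarith

private lemma taylor_C10_ge : ∀ t : ℝ, 0 ≤ t → 1 - t^2/2 + t^4/24 - t^6/720 + t^8/40320 - t^10/3628800 ≤ Real.cos t := by
  have hp : ∀ t : ℝ, HasDerivAt (fun t : ℝ => 1 - t^2/2 + t^4/24 - t^6/720 + t^8/40320 - t^10/3628800) (-t + t^3/6 - t^5/120 + t^7/5040 - t^9/362880) t := by
    intro t
    have h := ((((((hasDerivAt_const t (1:ℝ)).sub ((hasDerivAt_pow 2 t).div_const 2)).add ((hasDerivAt_pow 4 t).div_const 24)).sub ((hasDerivAt_pow 6 t).div_const 720)).add ((hasDerivAt_pow 8 t).div_const 40320)).sub ((hasDerivAt_pow 10 t).div_const 3628800))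
    refine h.congr_deriv ?_
    push_cast
    ring
  refine deriv_chain hp (fun t => Real.hasDerivAt_cos t) (by norm_num) ?_
  intro t ht
  have := taylor_S9_le t ht
  linarith

private lemma taylor_S11_ge : ∀ t : ℝ, 0 ≤ t → t - t^3/6 + t^5/120 - t^7/5040 + t^9/362880 - t^11/39916800 ≤ Real.sin t := by
  have hp : ∀ t : ℝ, HasDerivAt (fun t : ℝ => t - t^3/6 + t^5/120 - t^7/5040 + t^9/362880 - t^11/39916800) (1 - t^2/2 + t^4/24 - t^6/720 + t^8/40320 - t^10/3628800) t := by
    intro t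
    have h := ((((((hasDerivAt_id' t).sub ((hasDerivAt_pow 3 t).div_const 6)).add ((hasDerivAt_pow 5 t).div_const 120)).sub ((hasDerivAt_pow 7 t).div_const 5040)).add ((hasDerivAt_pow 9 t).div_const 362880)).sub ((hasDerivAt_pow 11 t).div_const 39916800))
    refine h.congr_deriv ?_
    push_cast
    ring
  refine deriv_chain hp (fun t => Real.hasDerivAt_sin t) (by norm_num) ?_
  intro t ht
  have := taylor_C10_ge t ht
  linarith

private lemma taylor_C12_le : ∀ t : ℝ, 0 ≤ t → Real.cos t ≤ 1 - t^2/2 + t^4/24 - t^6/720 + t^8/40320 - t^10/3628800 + t^12/479001600 := by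
  have hp : ∀ t : ℝ, HasDerivAt (fun t : ℝ => 1 - t^2/2 + t^4/24 - t^6/720 + t^8/40320 - t^10/3628800 + t^12/479001600) (-t + t^3/6 - t^5/120 + t^7/5040 - t^9/362880 + t^11/39916800) t := by
    intro t
    have h := (((((((hasDerivAt_const t (1:ℝ)).sub ((hasDerivAt_pow 2 t).div_const 2)).add ((hasDerivAt_pow 4 t).div_const 24)).sub ((hasDerivAt_pow 6 t).div_const 720)).add ((hasDerivAt_pow 8 t).div_const 40320)).sub ((hasDerivAt_pow 10 t).div_const 3628800)).add ((hasDerivAt_pow 12 t).div_const 479001600))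
    refine h.congr_deriv ?_
    push_cast
    ring
  refine deriv_chain (fun t => Real.hasDerivAt_cos t) hp (by norm_num) ?_
  intro t ht
  have := taylor_S11_ge t ht
  linarith

private lemma taylor_S13_le : ∀ t : ℝ, 0 ≤ t → Real.sin t ≤ t - t^3/6 + t^5/120 - t^7/5040 + t^9/362880 - t^11/39916800 + t^13/6227020800 := by
  have hp : ∀ t : ℝ, HasDerivAt (fun t : ℝ => t - t^3/6 + t^5/120 - t^7/5040 + t^9/362880 - t^11/39916800 + t^13/6227020800) (1 - t^2/2 + t^4/24 - t^6/720 + t^8/40320 - t^10/3628800 + t^12/479001600) t := by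
    intro t
    have h := (((((((hasDerivAt_id' t).sub ((hasDerivAt_pow 3 t).div_const 6)).add ((hasDerivAt_pow 5 t).div_const 120)).sub ((hasDerivAt_pow 7 t).div_const 5040)).add ((hasDerivAt_pow 9 t).div_const 362880)).sub ((hasDerivAt_pow 11 t).div_const 39916800)).add ((hasDerivAt_pow 13 t).div_const 6227020800))
    refine h.congr_deriv ?_
    push_cast
    ring
  refine deriv_chain (fun t => Real.hasDerivAt_sin t) hp (by norm_num) ?_
  intro t ht
  have := taylor_C12_le t ht
  linarith

private lemma taylor_C14_ge : ∀ t : ℝ, 0 ≤ t → 1 - t^2/2 + t^4/24 - t^6/720 + t^8/40320 - t^10/3628800 + t^12/479001600 - t^14/87178291200 ≤ Real.cos t := by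
  have hp : ∀ t : ℝ, HasDerivAt (fun t : ℝ => 1 - t^2/2 + t^4/24 - t^6/720 + t^8/40320 - t^10/3628800 + t^12/479001600 - t^14/87178291200) (-t + t^3/6 - t^5/120 + t^7/5040 - t^9/362880 + t^11/39916800 - t^13/6227020800) t := by
    intro t
    have h := ((((((((hasDerivAt_const t (1:ℝ)).sub ((hasDerivAt_pow 2 t).div_const 2)).add ((hasDerivAt_pow 4 t).div_const 24)).sub ((hasDerivAt_pow 6 t).div_const 720)).add ((hasDerivAt_pow 8 t).div_const 40320)).sub ((hasDerivAt_pow 10 t).div_const 3628800)).add ((hasDerivAt_pow 12 t).div_const 479001600)).sub ((hasDerivAt_pow 14 t).div_const 87178291200))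
    refine h.congr_deriv ?_
    push_cast
    ring
  refine deriv_chain hp (fun t => Real.hasDerivAt_cos t) (by norm_num) ?_
  intro t ht
  have := taylor_S13_le t ht
  linarith

private lemma taylor_S15_ge : ∀ t : ℝ, 0 ≤ t → t - t^3/6 + t^5/120 - t^7/5040 + t^9/362880 - t^11/39916800 + t^13/6227020800 - t^15/1307674368000 ≤ Real.sin t := by
  have hp : ∀ t : ℝ, HasDerivAt (fun t : ℝ => t - t^3/6 + t^5/120 - t^7/5040 + t^9/362880 - t^11/39916800 + t^13/6227020800 - t^15/1307674368000) (1 - t^2/2 + t^4/24 - t^6/720 + t^8/40320 - t^10/3628800 + t^12/479001600 - t^14/87178291200) t := by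
    intro t
    have h := ((((((((hasDerivAt_id' t).sub ((hasDerivAt_pow 3 t).div_const 6)).add ((hasDerivAt_pow 5 t).div_const 120)).sub ((hasDerivAt_pow 7 t).div_const 5040)).add ((hasDerivAt_pow 9 t).div_const 362880)).sub ((hasDerivAt_pow 11 t).div_const 39916800)).add ((hasDerivAt_pow 13 t).div_const 6227020800)).sub ((hasDerivAt_pow 15 t).div_const 1307674368000))
    refine h.congr_deriv ?_
    push_cast
    ring
  refine deriv_chain hp (fun t => Real.hasDerivAt_sin t) (by norm_num) ?_
  intro t ht
  have := taylor_C14_ge t ht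
  linarith

private lemma taylor_C16_le : ∀ t : ℝ, 0 ≤ t → Real.cos t ≤ 1 - t^2/2 + t^4/24 - t^6/720 + t^8/40320 - t^10/3628800 + t^12/479001600 - t^14/87178291200 + t^16/20922789888000 := by
  have hp : ∀ t : ℝ, HasDerivAt (fun t : ℝ => 1 - t^2/2 + t^4/24 - t^6/720 + t^8/40320 - t^10/3628800 + t^12/479001600 - t^14/87178291200 + t^16/20922789888000) (-t + t^3/6 - t^5/120 + t^7/5040 - t^9/362880 + t^11/39916800 - t^13/6227020800 + t^15/1307674368000) t := by
    intro t
    have h := (((((((((hasDerivAt_const t (1:ℝ)).sub ((hasDerivAt_pow 2 t).div_const 2)).add ((hasDerivAt_pow 4 t).div_const 24)).sub ((hasDerivAt_pow 6 t).div_const 720)).add ((hasDerivAt_pow 8 t).div_const 40320)).sub ((hasDerivAt_pow 10 t).div_const 3628800)).add ((hasDerivAt_pow 12 t).div_const 479001600)).sub ((hasDerivAt_pow 14 t).div_const 87178291200)).add ((hasDerivAt_pow 16 t).div_const 20922789888000))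
    refine h.congr_deriv ?_
    push_cast
    ring
  refine deriv_chain (fun t => Real.hasDerivAt_cos t) hp (by norm_num) ?_
  intro t ht
  have := taylor_S15_ge t ht
  linarith
private lemma abs_sin_nat_mul_le (n : ℕ) (y : ℝ) : |Real.sin (n * y)| ≤ n * |Real.sin y| := by
  induction n with
  | zero => simp
  | succ m ih =>
    have harg : ((m:ℝ)+1) * y = (m:ℝ)*y + y := by ring
    push_cast
    rw [harg, Real.sin_add]
    calc |Real.sin ((m:ℝ)*y) * Real.cos y + Real.cos ((m:ℝ)*y) * Real.sin y|
        ≤ |Real.sin ((m:ℝ)*y) * Real.cos y| + |Real.cos ((m:ℝ)*y) * Real.sin y| := abs_add_le _ _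
      _ ≤ |Real.sin ((m:ℝ)*y)| * 1 + 1 * |Real.sin y| := by
          rw [abs_mul, abs_mul]
          gcongr
          · exact Real.abs_cos_le_one y
          · exact Real.abs_cos_le_one _
      _ ≤ (m:ℝ) * |Real.sin y| + 1 * |Real.sin y| := by
          have := ih
          nlinarith [abs_nonneg (Real.sin y)]
      _ = ((m:ℝ) + 1) * |Real.sin y| := by ring

private lemma numeric_bound :
    (0.45:ℝ) ≤ 1 - π^2/9 + π^4*(32/3600) - π^6*(128/282240) + π^8*(512/32659200)
      - π^10*(2048/5269017600) + π^12*(8192/1133317785600)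
      - π^14*(32768/313841848320000) := by
  have h1 : (3.141592:ℝ) < π := Real.pi_gt_d6
  have h2 : π < 3.141593 := Real.pi_lt_d6
  have h0 : (0:ℝ) ≤ 3.141592 := by norm_num
  have hπ : (0:ℝ) ≤ π := Real.pi_pos.le
  have l4 : (3.141592:ℝ)^4 ≤ π^4 := pow_le_pow_left₀ h0 h1.le 4
  have l8 : (3.141592:ℝ)^8 ≤ π^8 := pow_le_pow_left₀ h0 h1.le 8
  have l12 : (3.141592:ℝ)^12 ≤ π^12 := pow_le_pow_left₀ h0 h1.le 12
  have u2 : π^2 ≤ (3.141593:ℝ)^2 := pow_le_pow_left₀ hπ h2.le 2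
  have u6 : π^6 ≤ (3.141593:ℝ)^6 := pow_le_pow_left₀ hπ h2.le 6
  have u10 : π^10 ≤ (3.141593:ℝ)^10 := pow_le_pow_left₀ hπ h2.le 10
  have u14 : π^14 ≤ (3.141593:ℝ)^14 := pow_le_pow_left₀ hπ h2.le 14
  nlinarith [l4, l8, l12, u2, u6, u10, u14]

set_option maxHeartbeats 2000000 in
/-- The main lobe of the Dirichlet kernel `D_N(f) = sin(πNf)/sin(πf)` contains most of
its energy: `∫₀^{1/N} |D_N(f)|² df ≥ 0.45 N` for every `N ≥ 1`. -/
theorem dirichlet_kernel_mainlobe_energy (N : ℕ) (hN : 1 ≤ N) :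
    0.45 * (N : ℝ)
      ≤ ∫ f in (0:ℝ)..(1 / (N : ℝ)),
          (Real.sin (Real.pi * N * f) / Real.sin (Real.pi * f)) ^ 2 := by
  have hNR : (1:ℝ) ≤ (N:ℝ) := by exact_mod_cast hN
  have hN0 : (0:ℝ) < N := by linarith
  have hπ := Real.pi_pos
  have hT0 : (0:ℝ) ≤ 1 / N := by positivity
  set a : ℝ := 2 * π * N with ha
  have ha0 : 0 < a := by positivity
  set g : ℝ → ℝ := fun f => (Real.sin (π * N * f) / Real.sin (π * f)) ^ 2 with hg
  set P : ℝ → ℝ := fun x => (a^2/2 - a^4*x^2/24 + a^6*x^4/720 - a^8*x^6/40320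
      + a^10*x^8/3628800 - a^12*x^10/479001600 + a^14*x^12/87178291200
      - a^16*x^14/20922789888000) / (2*π^2) with hP
  set F : ℝ → ℝ := fun x => (a^2*x/2 - a^4*x^3/72 + a^6*x^5/3600 - a^8*x^7/282240
      + a^10*x^9/32659200 - a^12*x^11/5269017600 + a^14*x^13/1133317785600
      - a^16*x^15/313841848320000) / (2*π^2) with hF
  -- bound for g
  have hgb : ∀ x : ℝ, g x ≤ (N:ℝ)^2 := by
    intro x
    rw [hg]
    simp only
    by_cases hs : Real.sin (π * x) = 0
    · rw [hs, div_zero]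
      norm_num
    · have harg : π * (N:ℝ) * x = (N:ℝ) * (π * x) := by ring
      have h1 : Real.sin (π*(N:ℝ)*x)^2 ≤ (N:ℝ)^2 * Real.sin (π*x)^2 := by
        calc Real.sin (π*(N:ℝ)*x)^2 = |Real.sin ((N:ℝ)*(π*x))|^2 := by rw [harg, sq_abs]
          _ ≤ ((N:ℝ) * |Real.sin (π*x)|)^2 :=
              pow_le_pow_left₀ (abs_nonneg _) (abs_sin_nat_mul_le N (π*x)) 2
          _ = (N:ℝ)^2 * Real.sin (π*x)^2 := by rw [mul_pow, sq_abs]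
      have hs2 : 0 < Real.sin (π*x)^2 := by positivity
      rw [div_pow, div_le_iff₀ hs2]
      linarith
  have hgm : Measurable g := by
    rw [hg]
    fun_prop
  have hgint : IntervalIntegrable g MeasureTheory.volume 0 (1/(N:ℝ)) := by
    refine (intervalIntegrable_const (c := (N:ℝ)^2)).mono_fun
      hgm.aestronglyMeasurable ?_
    refine Filter.Eventually.of_forall fun x => ?_
    simp only [Real.norm_eq_abs]
    have hgx : 0 ≤ g x := by rw [hg]; positivity
    rw [abs_of_nonneg hgx, abs_of_nonneg (by positivity : (0:ℝ) ≤ (N:ℝ)^2)]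
    exact hgb x
  have hPc : Continuous P := by rw [hP]; fun_prop
  have hPint : IntervalIntegrable P MeasureTheory.volume 0 (1/(N:ℝ)) :=
    hPc.intervalIntegrable 0 (1/(N:ℝ))
  -- a.e. pointwise bound
  have hae : P ≤ᵐ[MeasureTheory.volume.restrict (Set.Icc (0:ℝ) (1/(N:ℝ)))] g := by
    have h0 : ∀ᵐ x : ℝ, x ≠ 0 := by
      refine MeasureTheory.ae_iff.mpr ?_
      have he : {x : ℝ | ¬ x ≠ 0} = {0} := by ext y; simp
      rw [he, Real.volume_singleton]
    have h1 : ∀ᵐ x : ℝ, x ≠ 1 := by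
      refine MeasureTheory.ae_iff.mpr ?_
      have he : {x : ℝ | ¬ x ≠ 1} = {1} := by ext y; simp
      rw [he, Real.volume_singleton]
    filter_upwards [MeasureTheory.ae_restrict_of_ae h0, MeasureTheory.ae_restrict_of_ae h1,
      MeasureTheory.ae_restrict_mem measurableSet_Icc] with x hx0 hx1 hxm
    have hx0' : 0 < x := lt_of_le_of_ne hxm.1 (Ne.symm hx0)
    have hxT : x ≤ 1/(N:ℝ) := hxm.2
    have hT1 : 1/(N:ℝ) ≤ 1 := by
      rw [div_le_one hN0]; exact hNR
    have hx1' : x < 1 := lt_of_le_of_ne (hxT.trans hT1) hx1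
    have hsb : 0 < Real.sin (π * x) :=
      Real.sin_pos_of_pos_of_lt_pi (by positivity) (by nlinarith)
    have hsble : Real.sin (π*x) ≤ π*x := Real.sin_le (by positivity)
    have hax : 0 ≤ a * x := by positivity
    have hQ : (a*x)^2/2 - (a*x)^4/24 + (a*x)^6/720 - (a*x)^8/40320 + (a*x)^10/3628800
        - (a*x)^12/479001600 + (a*x)^14/87178291200 - (a*x)^16/20922789888000
        ≤ 1 - Real.cos (a*x) := by
      have := taylor_C16_le (a*x) hax
      linarith
    have hcos : 1 - Real.cos (a*x) = 2 * Real.sin (π*(N:ℝ)*x)^2 := by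
      have h2 : a*x = 2*(π*(N:ℝ)*x) := by rw [ha]; ring
      rw [h2, Real.sin_sq_eq_half_sub]
      ring
    have hPx : P x = ((a*x)^2/2 - (a*x)^4/24 + (a*x)^6/720 - (a*x)^8/40320
        + (a*x)^10/3628800 - (a*x)^12/479001600 + (a*x)^14/87178291200
        - (a*x)^16/20922789888000) / (2*π^2*x^2) := by
      rw [hP]
      simp only
      field_simp
    have hPle : P x ≤ Real.sin (π*(N:ℝ)*x)^2 / (π*x)^2 := by
      rw [hPx]
      calc ((a*x)^2/2 - (a*x)^4/24 + (a*x)^6/720 - (a*x)^8/40320 + (a*x)^10/3628800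
          - (a*x)^12/479001600 + (a*x)^14/87178291200 - (a*x)^16/20922789888000)
            / (2*π^2*x^2)
          ≤ (2 * Real.sin (π*(N:ℝ)*x)^2) / (2*π^2*x^2) := by
            apply (div_le_div_iff_of_pos_right (by positivity)).mpr
            linarith
        _ = Real.sin (π*(N:ℝ)*x)^2 / (π*x)^2 := by
            rw [mul_pow]
            ring
    have hfinal : Real.sin (π*(N:ℝ)*x)^2 / (π*x)^2 ≤ g x := by
      rw [hg]
      simp only
      rw [div_pow]
      refine div_le_div_of_nonneg_left (sq_nonneg _) (by positivity) ?_
      exact pow_le_pow_left₀ hsb.le hsble 2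
    linarith
  have hmono := intervalIntegral.integral_mono_ae_restrict hT0 hPint hgint hae
  -- evaluate the polynomial integral
  have hFd : ∀ x ∈ Set.uIcc (0:ℝ) (1/(N:ℝ)), HasDerivAt F (P x) x := by
    intro x _
    have h := ((((((((((hasDerivAt_id' x).const_mul (a^2)).div_const 2).sub
      (((hasDerivAt_pow 3 x).const_mul (a^4)).div_const 72)).add
      (((hasDerivAt_pow 5 x).const_mul (a^6)).div_const 3600)).sub
      (((hasDerivAt_pow 7 x).const_mul (a^8)).div_const 282240)).add
      (((hasDerivAt_pow 9 x).const_mul (a^10)).div_const 32659200)).sub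
      (((hasDerivAt_pow 11 x).const_mul (a^12)).div_const 5269017600)).add
      (((hasDerivAt_pow 13 x).const_mul (a^14)).div_const 1133317785600)).sub
      (((hasDerivAt_pow 15 x).const_mul (a^16)).div_const 313841848320000)).div_const (2*π^2)
    rw [hF, hP]
    simp only
    refine h.congr_deriv ?_
    push_cast
    ring
  have hint : ∫ x in (0:ℝ)..(1/(N:ℝ)), P x = F (1/(N:ℝ)) - F 0 :=
    intervalIntegral.integral_eq_sub_of_hasDerivAt hFd hPint
  have hF0 : F 0 = 0 := by rw [hF]; norm_num
  have hFT : F (1/(N:ℝ)) = (N:ℝ) * (1 - π^2/9 + π^4*(32/3600) - π^6*(128/282240)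
      + π^8*(512/32659200) - π^10*(2048/5269017600) + π^12*(8192/1133317785600)
      - π^14*(32768/313841848320000)) := by
    have hπne : π ≠ 0 := ne_of_gt hπ
    have hNne : (N:ℝ) ≠ 0 := ne_of_gt hN0
    rw [hF, ha]
    field_simp
    ring
  have hnum := numeric_bound
  calc (0.45:ℝ) * N
      ≤ (N:ℝ) * (1 - π^2/9 + π^4*(32/3600) - π^6*(128/282240)
        + π^8*(512/32659200) - π^10*(2048/5269017600) + π^12*(8192/1133317785600)
        - π^14*(32768/313841848320000)) := by nlinarith
    _ = F (1/(N:ℝ)) := hFT.symm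
    _ = ∫ x in (0:ℝ)..(1/(N:ℝ)), P x := by rw [hint, hF0]; ring
    _ ≤ ∫ f in (0:ℝ)..(1/(N:ℝ)), g f := hmono
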